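/- arXiv:1310.4282 — 3 statements merged into one kernel-verified Lean document; each statement's English description precedes it below -/
import Mathlib

section
/- In the network of Example 3 — demand D = 2C at node 1, generators 1 and 4 at node 1 with marginal costs 1 and 2k, generators 2 and 3 at node 2 with marginal cost k, line capacity C, k > 1 — the efficient dispatch is x* = (2C, 0, 0, 0) with total cost 2C, while the dispatch x = (C, C, 0, 0) has total cost (1 + k)C; hence the ratio of costs is (k+1)/2, which tends to infinity as k → ∞. -/
/-- Example 3: cost computations underlying the unbounded price of anarchy. -/
theorem poa_example_costs
    (k C : ℝ) (hk : 1 < k) (hC : 0 < C) :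
    (∀ x₁ x₂ x₃ x₄ : ℝ, 0 ≤ x₁ → 0 ≤ x₂ → 0 ≤ x₃ → 0 ≤ x₄ →
        x₂ + x₃ ≤ C → x₁ + x₂ + x₃ + x₄ = 2 * C →
        2 * C ≤ x₁ + k * x₂ + k * x₃ + 2 * k * x₄) ∧
    (1 * (2 * C) + k * 0 + k * 0 + 2 * k * 0 = 2 * C) ∧
    (1 * C + k * C + k * 0 + 2 * k * 0 = (1 + k) * C) ∧
    ((1 + k) * C / (2 * C) = (k + 1) / 2) ∧
    Filter.Tendsto (fun k' : ℝ => (k' + 1) / 2) Filter.atTop Filter.atTop := by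
  refine ⟨?_, by ring, by ring, ?_, ?_⟩
  · intro x₁ x₂ x₃ x₄ h1 h2 h3 h4 _ hsum
    nlinarith
  · field_simp
    ring
  · exact (Filter.tendsto_atTop_add_const_right _ 1 Filter.tendsto_id).atTop_div_const (by norm_num)
end

section
/- Let P ⊆ ℝ^N_{≥0} be a nonempty convex set, c_n : ℝ_{≥0} → ℝ convex differentiable with c_n(0) = 0, and x* ∈ P minimizing ∑_n c_n(x_n) over P. Define bids b_n(x) = p_n x for x ≤ s_n and q_n x + (p_n − q_n)s_n for x > s_n with p_n = c_n'(x*_n), s_n = x*_n, and any q_n > p_n. Then x* minimizes ∑_n b_n(x_n) over P. -/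
/-- The truthful-at-the-margin bid profile makes the efficient dispatch also optimal for
the reported bids. -/
theorem efficient_dispatch_optimal_for_bids
    {N : ℕ} (P : Set (Fin N → ℝ)) (hPne : P.Nonempty) (hPconv : Convex ℝ P)
    (hPnonneg : ∀ x ∈ P, ∀ n, 0 ≤ x n)
    (c : Fin N → ℝ → ℝ)
    (hconv : ∀ n, ConvexOn ℝ (Set.Ici 0) (c n))
    (hdiff : ∀ n, Differentiable ℝ (c n))
    (hc0 : ∀ n, c n 0 = 0)
    (xstar : Fin N → ℝ) (hxstar : xstar ∈ P)
    (hmin : ∀ x ∈ P, ∑ n, c n (xstar n) ≤ ∑ n, c n (x n))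
    (p s q : Fin N → ℝ)
    (hp : ∀ n, p n = deriv (c n) (xstar n))
    (hs : ∀ n, s n = xstar n)
    (hq : ∀ n, p n < q n)
    (b : Fin N → ℝ → ℝ)
    (hb : ∀ n x, b n x = if x ≤ s n then p n * x else q n * x + (p n - q n) * s n) :
    ∀ x ∈ P, ∑ n, b n (xstar n) ≤ ∑ n, b n (x n) := by
  intro x hx
  set d : Fin N → ℝ := fun n => x n - xstar n with hd
  set φ : ℝ → ℝ := fun t => ∑ n, c n (xstar n + t * d n) with hφ
  -- derivative of φ at 0
  have hder : HasDerivAt φ (∑ n, p n * d n) 0 := by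
    apply HasDerivAt.fun_sum
    intro n _
    have h1 : HasDerivAt (fun t : ℝ => xstar n + t * d n) (d n) 0 := by
      simpa using ((hasDerivAt_id (0:ℝ)).mul_const (d n)).const_add (xstar n)
    have h2 : HasDerivAt (c n) (deriv (c n) (xstar n)) (xstar n + 0 * d n) := by
      simpa using ((hdiff n) (xstar n)).hasDerivAt
    have := h2.comp (h := fun t : ℝ => xstar n + t * d n) (0:ℝ) (by simpa using h1)
    simpa [hp n, mul_comm, Function.comp_def] using this
  -- φ t ≥ φ 0 for t ∈ Ioc 0 1
  have hmin' : ∀ t ∈ Set.Ioc (0:ℝ) 1, φ 0 ≤ φ t := by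
    intro t ht
    have hmem : (fun n => xstar n + t * d n) ∈ P := by
      have := hPconv hxstar hx (a := 1 - t) (b := t) (by linarith [ht.2]) (le_of_lt ht.1)
        (by ring)
      convert this using 1
      funext n
      simp [hd, smul_eq_mul]
      ring
    have := hmin _ hmem
    simpa [hφ] using this
  -- FOC: ∑ p n * d n ≥ 0
  have hfoc : 0 ≤ ∑ n, p n * d n := by
    have hslope : Filter.Tendsto (slope φ 0) (nhdsWithin 0 {(0:ℝ)}ᶜ)
        (nhds (∑ n, p n * d n)) := hasDerivAt_iff_tendsto_slope.mp hder
    have hslope' : Filter.Tendsto (slope φ 0) (nhdsWithin 0 (Set.Ioi 0))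
        (nhds (∑ n, p n * d n)) :=
      hslope.mono_left (nhdsWithin_mono _ (fun t ht => ne_of_gt ht))
    refine ge_of_tendsto hslope' ?_
    filter_upwards [Ioc_mem_nhdsGT_of_mem (by norm_num : (0:ℝ) ∈ Set.Ico 0 1)]
      with t ht
    have := hmin' t ht
    have hpos : (0:ℝ) < t := ht.1
    rw [slope_def_field]
    have : 0 ≤ φ t - φ 0 := by linarith
    have := div_nonneg this (le_of_lt hpos)
    simpa [div_eq_inv_mul, sub_zero] using this
  -- b n (xstar n) = p n * xstar n
  have hbx : ∀ n, b n (xstar n) = p n * xstar n := by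
    intro n
    rw [hb n, if_pos (by rw [hs n])]
  -- p n * x n ≤ b n (x n)
  have hbge : ∀ n, p n * x n ≤ b n (x n) := by
    intro n
    rw [hb n]
    by_cases h : x n ≤ s n
    · rw [if_pos h]
    · rw [if_neg h]
      push_neg at h
      nlinarith [hq n]
  calc ∑ n, b n (xstar n) = ∑ n, p n * xstar n := by simp [hbx]
    _ ≤ ∑ n, p n * x n := by
        have : ∑ n, p n * x n - ∑ n, p n * xstar n = ∑ n, p n * d n := by
          rw [← Finset.sum_sub_distrib]
          congr 1; funext n; simp [hd]; ring
        linarith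
    _ ≤ ∑ n, b n (x n) := Finset.sum_le_sum (fun n _ => hbge n)
end

section
/- Under the PNSP mechanism with bid profile b_n specified by (p_n, s_n, q_n) where p_n = c_n'(x*_n), s_n = x*_n, q_n > p_n (with x* the efficient dispatch over a convex feasible set P), for every generator n₀ and every alternative dispatch x̃ ∈ P, the payoff change satisfies ∑_{n ≠ n₀} b_n(x*_n) − ∑_{n ≠ n₀} b_n(x̃_n) + c_{n₀}(x*_{n₀}) − c_{n₀}(x̃_{n₀}) ≤ 0. -/
/-- Gradient inequality for a convex differentiable function on `Ici 0`. -/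
lemma grad_ineq {f : ℝ → ℝ} (hf : ConvexOn ℝ (Set.Ici 0) f)
    (hd : Differentiable ℝ f) {a b : ℝ} (ha : a ∈ Set.Ici (0:ℝ)) (hb : b ∈ Set.Ici (0:ℝ)) :
    deriv f a * (b - a) ≤ f b - f a := by
  rcases lt_trichotomy a b with h | h | h
  · have hsl := hf.deriv_le_slope ha hb h (hd a)
    rw [slope_def_field] at hsl
    have hpos : 0 < b - a := sub_pos.mpr h
    calc deriv f a * (b - a) ≤ (f b - f a) / (b - a) * (b - a) :=
          mul_le_mul_of_nonneg_right hsl hpos.le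
      _ = f b - f a := div_mul_cancel₀ _ hpos.ne'
  · simp [h]
  · have hsl := hf.slope_le_deriv hb ha h (hd a)
    rw [slope_def_field] at hsl
    have hpos : 0 < a - b := sub_pos.mpr h
    have h2 : (f a - f b) / (a - b) * (a - b) ≤ deriv f a * (a - b) :=
      mul_le_mul_of_nonneg_right hsl hpos.le
    rw [div_mul_cancel₀ _ hpos.ne'] at h2
    nlinarith

/-- First-order optimality condition at a minimizer over a convex set. -/
lemma first_order {N : ℕ} {P : Set (Fin N → ℝ)} (hPconv : Convex ℝ P)
    (c : Fin N → ℝ → ℝ) (hdiff : ∀ n, Differentiable ℝ (c n))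
    (xstar : Fin N → ℝ) (hxstar : xstar ∈ P)
    (hmin : ∀ x ∈ P, ∑ n, c n (xstar n) ≤ ∑ n, c n (x n))
    (xt : Fin N → ℝ) (hxt : xt ∈ P) :
    0 ≤ ∑ n, deriv (c n) (xstar n) * (xt n - xstar n) := by
  set g : ℝ → ℝ := fun t => ∑ n, c n (xstar n + t * (xt n - xstar n)) with hg_def
  have hg : HasDerivAt g (∑ n, deriv (c n) (xstar n) * (xt n - xstar n)) 0 := by
    apply HasDerivAt.fun_sum
    intro n _
    have inner : HasDerivAt (fun t : ℝ => xstar n + t * (xt n - xstar n))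
        (xt n - xstar n) 0 := by
      simpa using ((hasDerivAt_id (0:ℝ)).mul_const (xt n - xstar n)).const_add (xstar n)
    have outer : HasDerivAt (c n) (deriv (c n) (xstar n))
        ((fun t : ℝ => xstar n + t * (xt n - xstar n)) 0) := by
      simpa using ((hdiff n) (xstar n)).hasDerivAt
    exact outer.comp 0 inner
  have hmono : ∀ t ∈ Set.Ioc (0:ℝ) 1, g 0 ≤ g t := by
    intro t ht
    have hmem : (fun n => xstar n + t * (xt n - xstar n)) ∈ P := by
      have h := hPconv hxstar hxt (by linarith [ht.2] : (0:ℝ) ≤ 1 - t) ht.1.le (by ring)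
      convert h using 1
      funext n
      simp only [Pi.add_apply, Pi.smul_apply, smul_eq_mul]
      ring
    have := hmin _ hmem
    simpa [hg_def] using this
  have hset : Set.Ioi (0:ℝ) \ {0} = Set.Ioi 0 := Set.diff_singleton_eq_self (by simp)
  have hslope : Filter.Tendsto (slope g 0) (nhdsWithin 0 (Set.Ioi (0:ℝ)))
      (nhds (∑ n, deriv (c n) (xstar n) * (xt n - xstar n))) := by
    have := (hg.hasDerivWithinAt (s := Set.Ioi 0))
    rw [hasDerivWithinAt_iff_tendsto_slope, hset] at this
    exact this
  apply ge_of_tendsto hslope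
  filter_upwards [Ioc_mem_nhdsGT_of_mem (Set.left_mem_Ico.mpr one_pos)] with t ht
  rw [slope_def_field]
  have h1 := hmono t ht
  have h2 : (0:ℝ) < t - 0 := by simpa using ht.1
  exact div_nonneg (by linarith) h2.le

/-- PNSP deviation inequality: under the truthful-at-the-margin bid profile, the payoff
change of any generator from any alternative dispatch is nonpositive. -/
theorem pnsp_deviation_inequality
    {N : ℕ} (P : Set (Fin N → ℝ)) (hPne : P.Nonempty) (hPconv : Convex ℝ P)
    (hPnonneg : ∀ x ∈ P, ∀ n, 0 ≤ x n)
    (c : Fin N → ℝ → ℝ)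
    (hconv : ∀ n, ConvexOn ℝ (Set.Ici 0) (c n))
    (hdiff : ∀ n, Differentiable ℝ (c n))
    (hc0 : ∀ n, c n 0 = 0)
    (xstar : Fin N → ℝ) (hxstar : xstar ∈ P)
    (hmin : ∀ x ∈ P, ∑ n, c n (xstar n) ≤ ∑ n, c n (x n))
    (p s q : Fin N → ℝ)
    (hp : ∀ n, p n = deriv (c n) (xstar n))
    (hs : ∀ n, s n = xstar n)
    (hq : ∀ n, p n < q n)
    (b : Fin N → ℝ → ℝ)
    (hb : ∀ n x, b n x = if x ≤ s n then p n * x else q n * x + (p n - q n) * s n) :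
    ∀ n₀ : Fin N, ∀ xt ∈ P,
      (∑ n ∈ Finset.univ.erase n₀, b n (xstar n)) -
        (∑ n ∈ Finset.univ.erase n₀, b n (xt n)) +
        c n₀ (xstar n₀) - c n₀ (xt n₀) ≤ 0 := by
  intro n₀ xt hxt
  -- per-coordinate bound for the non-deviating generators
  have key : ∀ n, b n (xstar n) - b n (xt n) ≤ p n * (xstar n - xt n) := by
    intro n
    have hbstar : b n (xstar n) = p n * xstar n := by
      rw [hb, hs, if_pos le_rfl]
    have hbxt : p n * xt n ≤ b n (xt n) := by
      rw [hb]
      split_ifs with h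
      · exact le_rfl
      · push_neg at h
        nlinarith [hq n]
    nlinarith
  -- bound for the deviating generator via the gradient inequality
  have key0 : c n₀ (xstar n₀) - c n₀ (xt n₀) ≤ p n₀ * (xstar n₀ - xt n₀) := by
    have := grad_ineq (hconv n₀) (hdiff n₀) (hPnonneg xstar hxstar n₀) (hPnonneg xt hxt n₀)
    rw [hp]
    nlinarith
  have hfo := first_order hPconv c hdiff xstar hxstar hmin xt hxt
  -- rewrite first-order condition via p
  have hfo' : (0:ℝ) ≤ ∑ n, p n * (xt n - xstar n) := by
    have : (∑ n, p n * (xt n - xstar n)) = ∑ n, deriv (c n) (xstar n) * (xt n - xstar n) :=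
      Finset.sum_congr rfl fun n _ => by rw [hp]
    rw [this]; exact hfo
  have hsum : ∑ n ∈ Finset.univ.erase n₀, (b n (xstar n) - b n (xt n)) ≤
      ∑ n ∈ Finset.univ.erase n₀, p n * (xstar n - xt n) :=
    Finset.sum_le_sum fun n _ => key n
  have hsplit := Finset.sum_erase_add Finset.univ
      (fun n => p n * (xstar n - xt n)) (Finset.mem_univ n₀)
  have hneg : (∑ n, p n * (xstar n - xt n)) = - ∑ n, p n * (xt n - xstar n) := by
    rw [← Finset.sum_neg_distrib]
    exact Finset.sum_congr rfl fun n _ => by ring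
  rw [Finset.sum_sub_distrib] at hsum
  linarith
end
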